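/- Consider a column of n rows taking values in a set of n_i distinct values, arranged so that equal values occupy consecutive rows (a sorted column). Let each value v be assigned an injective code(v) ∈ {0,1}^L, and suppose that for every two values that occur in consecutive (adjacent) runs of the column, the Hamming distance between their codes is exactly 2. Fix a word length w ≥ 1 with w dividing n, and for each bitmap position p ∈ {1,…,L} form the bitmap whose r-th bit is the p-th bit of the code of the value in row r. Then the total number of dirty words over all L bitmaps is at most 2·n_i. -/

import Mathlib

private lemma const_of_steps (g : ℕ → Bool) :
    ∀ a b : ℕ, a ≤ b → (∀ i, a ≤ i → i < b → g i = g (i+1)) → g a = g b := by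
  intro a b hab
  induction b, hab using Nat.le_induction with
  | base => intro _; rfl
  | succ b hab ih =>
    intro h
    rw [ih (fun i hi hib => h i hi (Nat.lt_succ_of_lt hib))]
    exact h b hab (Nat.lt_succ_self b)

/-- A sorted column of `n` rows (`w ∣ n`, `w ≥ 1`) with values among `nI` distinct
values (`val`), where equal values occupy consecutive rows, encoded by an injective
code `Fin nI → Fin L → Bool` such that values in adjacent runs have codes at
Hamming distance exactly `2`. The `p`-th bitmap has `r`-th bit `code (val r) p`,
and is partitioned into `n / w` words of `w` consecutive bits; a word is dirty if
its bits are not all equal. Then the total number of dirty words over the `L`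
bitmaps is at most `2 · nI`. -/
theorem dirty_words_le_of_sorted_column (n nI L w : ℕ) (hw : 1 ≤ w) (hdvd : w ∣ n)
    (val : ℕ → Fin nI) (code : Fin nI → Fin L → Bool)
    (hinj : Function.Injective code)
    (hsorted : ∀ a b c : ℕ, a ≤ b → b ≤ c → c < n → val a = val c → val a = val b)
    (hadj : ∀ r : ℕ, r + 1 < n → val r ≠ val (r + 1) →
      hammingDist (code (val r)) (code (val (r + 1))) = 2) :
    ∑ p : Fin L,
      ((Finset.range (n / w)).filter (fun q =>
        ∃ j₁ ∈ Finset.range w, ∃ j₂ ∈ Finset.range w,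
          code (val (q * w + j₁)) p ≠ code (val (q * w + j₂)) p)).card
      ≤ 2 * nI := by
  classical
  set B : Finset ℕ := (Finset.range (n-1)).filter (fun r => val r ≠ val (r+1)) with hB
  have hBmem : ∀ r ∈ B, r + 1 < n ∧ val r ≠ val (r+1) := by
    intro r hr
    rw [hB, Finset.mem_filter, Finset.mem_range] at hr
    exact ⟨by omega, hr.2⟩
  have hBcard : B.card ≤ nI := by
    have hmap : ∀ r ∈ B, val (r+1) ∈ (Finset.univ : Finset (Fin nI)) :=
      fun _ _ => Finset.mem_univ _
    have hinj' : Set.InjOn (fun r => val (r+1)) B := by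
      intro r1 h1 r2 h2 heq
      simp only [Finset.mem_coe] at h1 h2
      obtain ⟨hn1, hv1⟩ := hBmem r1 h1
      obtain ⟨hn2, hv2⟩ := hBmem r2 h2
      by_contra hne
      rcases Nat.lt_or_ge r1 r2 with hlt | hge
      · have h3 : val (r1+1) = val r2 :=
          hsorted (r1+1) r2 (r2+1) hlt (Nat.le_succ _) hn2 heq
        exact hv2 (h3.symm.trans heq)
      · have hlt : r2 < r1 := by omega
        have h3 : val (r2+1) = val r1 :=
          hsorted (r2+1) r1 (r1+1) hlt (Nat.le_succ _) hn1 heq.symm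
        exact hv1 (h3.symm.trans heq.symm)
    calc B.card ≤ (Finset.univ : Finset (Fin nI)).card :=
          Finset.card_le_card_of_injOn _ hmap hinj'
      _ = nI := by simp
  have step1 : ∀ p : Fin L,
      ((Finset.range (n / w)).filter (fun q =>
        ∃ j₁ ∈ Finset.range w, ∃ j₂ ∈ Finset.range w,
          code (val (q * w + j₁)) p ≠ code (val (q * w + j₂)) p)).card
      ≤ ((Finset.range (n-1)).filter
          (fun r => code (val r) p ≠ code (val (r+1)) p)).card := by
    intro p
    set g : ℕ → Bool := fun r => code (val r) p with hg
    have hex : ∀ q ∈ (Finset.range (n / w)).filter (fun q =>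
        ∃ j₁ ∈ Finset.range w, ∃ j₂ ∈ Finset.range w,
          code (val (q * w + j₁)) p ≠ code (val (q * w + j₂)) p),
        ∃ r, q * w ≤ r ∧ r + 1 < q * w + w ∧ g r ≠ g (r+1) := by
      intro q hq
      simp only [Finset.mem_filter, Finset.mem_range] at hq
      obtain ⟨hqn, j₁, hj₁, j₂, hj₂, hne⟩ := hq
      by_contra hcon
      push_neg at hcon
      have e1 : g (q*w) = g (q*w + j₁) := const_of_steps g _ _ (Nat.le_add_right _ _)
        (fun i hi1 hi2 => hcon i hi1 (by omega))
      have e2 : g (q*w) = g (q*w + j₂) := const_of_steps g _ _ (Nat.le_add_right _ _)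
        (fun i hi1 hi2 => hcon i hi1 (by omega))
      exact hne (e1.symm.trans e2)
    apply Finset.card_le_card_of_injOn (fun q =>
      if h : ∃ r, q * w ≤ r ∧ r + 1 < q * w + w ∧ g r ≠ g (r+1) then h.choose else 0)
    · intro q hq
      have h := hex q hq
      simp only [dif_pos h]
      obtain ⟨h1, h2, h3⟩ := h.choose_spec
      have hqlt : q < n / w := Finset.mem_range.mp (Finset.mem_filter.mp hq).1
      have hle : q * w + w ≤ n := by
        have hm : (q+1) * w ≤ (n/w) * w := Nat.mul_le_mul_right w (by omega)
        rw [add_one_mul] at hm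
        have hd := Nat.div_mul_le_self n w
        omega
      simp only [Finset.mem_coe, Finset.mem_filter, Finset.mem_range]
      exact ⟨by omega, h3⟩
    · intro q1 h1 q2 h2 hfe
      have e1 := hex q1 h1
      have e2 := hex q2 h2
      simp only [dif_pos e1, dif_pos e2] at hfe
      obtain ⟨a1, b1, -⟩ := e1.choose_spec
      obtain ⟨a2, b2, -⟩ := e2.choose_spec
      rw [hfe] at a1 b1
      by_contra hne
      rcases Nat.lt_or_ge q1 q2 with h | h
      · have hm : (q1+1) * w ≤ q2 * w := Nat.mul_le_mul_right w (by omega)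
        rw [add_one_mul] at hm
        omega
      · have hm : (q2+1) * w ≤ q1 * w := Nat.mul_le_mul_right w (by omega)
        rw [add_one_mul] at hm
        omega
  calc ∑ p : Fin L,
      ((Finset.range (n / w)).filter (fun q =>
        ∃ j₁ ∈ Finset.range w, ∃ j₂ ∈ Finset.range w,
          code (val (q * w + j₁)) p ≠ code (val (q * w + j₂)) p)).card
      ≤ ∑ p : Fin L, ((Finset.range (n-1)).filter
          (fun r => code (val r) p ≠ code (val (r+1)) p)).card :=
        Finset.sum_le_sum (fun p _ => step1 p)
    _ = ∑ p : Fin L, ∑ r ∈ Finset.range (n-1),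
          (if code (val r) p ≠ code (val (r+1)) p then 1 else 0) := by
        simp [Finset.card_filter]
    _ = ∑ r ∈ Finset.range (n-1), ∑ p : Fin L,
          (if code (val r) p ≠ code (val (r+1)) p then 1 else 0) := Finset.sum_comm
    _ = ∑ r ∈ Finset.range (n-1),
          ((Finset.univ : Finset (Fin L)).filter
            (fun p => code (val r) p ≠ code (val (r+1)) p)).card := by
        simp [Finset.card_filter]
    _ = ∑ r ∈ B, 2 := by
        rw [hB, Finset.sum_filter]
        apply Finset.sum_congr rfl
        intro r hr
        rw [Finset.mem_range] at hr
        by_cases hv : val r = val (r+1)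
        · simp [hv]
        · have hh := hadj r (by omega) hv
          rw [if_pos hv]
          rw [hammingDist] at hh
          convert hh using 2
    _ = 2 * B.card := by simp [Finset.sum_const, mul_comm]
    _ ≤ 2 * nI := by omega
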